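/- Let A be a nonempty finite alphabet and S a primitive substitution on A. Let θ > 1, and suppose Č > 0 satisfies Č·θⁿ ≤ |Sⁿ(a)| for all a ∈ A and n ∈ ℕ, and that C_S ≥ 1 is a linear repetitivity constant for S (every legal word u is an infix of every legal word w with |w| ≥ C_S·|u|). Then for every configuration ω₀ : ℤ → A, every r ≥ 1, and every n ∈ ℕ with n ≥ (log r)/(log θ) + (log C_S − log Č)/(log θ), every legal word of length r occurs in the configuration Sⁿ(ω₀), i.e. W(S)_r ⊆ W(Sⁿ(ω₀))_r. -/

import Mathlib

namespace QC

variable {A : Type*}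

/-- The shift action of `ℤ` on configurations: `(m · ω)(n) = ω (n - m)`. -/
def shift (m : ℤ) (ω : ℤ → A) : ℤ → A := fun n => ω (n - m)

/-- The word `u` occurs in the configuration `ω` (at some position `k`). -/
def Occurs (u : List A) (ω : ℤ → A) : Prop :=
  ∃ k : ℤ, u = (List.range u.length).map fun i => ω (k + i)

/-- The dictionary of a configuration: all (nonempty) words occurring in it. -/
def Dict (ω : ℤ → A) : Set (List A) := {u | u ≠ [] ∧ Occurs u ω}

/-- The set of length-`ℓ` words occurring in a configuration. -/
def DictLen (ω : ℤ → A) (ℓ : ℕ) : Set (List A) := {u | u.length = ℓ ∧ Occurs u ω}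

/-- The extension of a substitution rule `S : A → List A` to words, by concatenation. -/
def wordSub (S : A → List A) (u : List A) : List A := (u.map S).flatten

/-- A word is legal for `S` if it is an infix of `Sⁿ(a)` for some letter `a` and `n : ℕ`. -/
def Legal (S : A → List A) (u : List A) : Prop :=
  ∃ (a : A) (n : ℕ), u <:+: (wordSub S)^[n] [a]

/-- `S` is primitive: some power `p ≥ 1` of `S` maps every letter to a word containing
all letters. -/
def Primitive (S : A → List A) : Prop :=
  ∃ p : ℕ, 1 ≤ p ∧ ∀ a b : A, b ∈ (wordSub S)^[p] [a]

/-- The starting position (in `S ω`) of the block coming from the letter `ω k`. -/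
def blockStart (S : A → List A) (ω : ℤ → A) (k : ℤ) : ℤ :=
  if 0 ≤ k then ((List.range k.toNat).map fun i => ((S (ω i)).length : ℤ)).sum
  else -((List.range (-k).toNat).map fun i => ((S (ω (-(i : ℤ) - 1))).length : ℤ)).sum

open Classical in
/-- The extension of a substitution to two-sided configurations: the block structure of
`S ω` is `⋯ S(ω(-1)) . S(ω 0) S(ω 1) ⋯`, with the block of `ω 0` starting at position `0`. -/
noncomputable def confSub [Nonempty A] (S : A → List A) (ω : ℤ → A) : ℤ → A := fun n =>
  if h : ∃ k : ℤ, blockStart S ω k ≤ n ∧ n < blockStart S ω (k + 1) then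
    (S (ω (Classical.choose h))).getD (n - blockStart S ω (Classical.choose h)).toNat
      (Classical.arbitrary A)
  else Classical.arbitrary A

/-- The metric on configurations:
`d(ω₁, ω₂) = inf { 1/(r+1) : ω₁ and ω₂ agree on all |k| < r }`. -/
noncomputable def confDist (ω₁ ω₂ : ℤ → A) : ℝ :=
  sInf {x : ℝ | ∃ r : ℕ, x = 1 / (r + 1) ∧ ∀ k : ℤ, |k| < (r : ℤ) → ω₁ k = ω₂ k}

/-- Distance from a configuration to a set of configurations. -/
noncomputable def distToSet (ω : ℤ → A) (Ω : Set (ℤ → A)) : ℝ :=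
  sInf (confDist ω '' Ω)

/-- The Hausdorff distance between two sets of configurations, induced by `confDist`. -/
noncomputable def hausDist (Ω₁ Ω₂ : Set (ℤ → A)) : ℝ :=
  max (sSup ((fun ω => distToSet ω Ω₂) '' Ω₁)) (sSup ((fun ω => distToSet ω Ω₁) '' Ω₂))

/-- The product topology on `ℤ → A`, where `A` carries the discrete topology. -/
def confTop (A : Type*) : TopologicalSpace (ℤ → A) :=
  @Pi.topologicalSpace ℤ (fun _ => A) fun _ => ⊥

/-- The shift orbit of a configuration. -/
def orbit (ω : ℤ → A) : Set (ℤ → A) := {η | ∃ m : ℤ, η = shift m ω}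

/-- The hull of a configuration: the closure of its shift orbit in the product topology. -/
def hull (ω : ℤ → A) : Set (ℤ → A) := @closure _ (confTop A) (orbit ω)

/-- The `n`-th iterated hull `Ωₙ(ω₀)`: the hull of `Sⁿ(ω₀)`. -/
noncomputable def IHS [Nonempty A] (S : A → List A) (ω₀ : ℤ → A) (n : ℕ) : Set (ℤ → A) :=
  hull ((confSub S)^[n] ω₀)

/-- The substitution subshift `Ω(S) = {ω : W(ω) ⊆ W(S)}`. -/
def OmegaS (S : A → List A) : Set (ℤ → A) := {ω | ∀ u ∈ Dict ω, Legal S u}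

/-- Edges of the directed graph `G(S)`: `u → w` iff `u, w` are both illegal and `w` is an
infix of `S(u)`. -/
def GEdge (S : A → List A) (u w : List A) : Prop :=
  ¬Legal S u ∧ ¬Legal S w ∧ w <:+: wordSub S u

/-- `p` is a directed path of length `ℓ` in `G(S)` (on the vertex set of `2`-words). -/
def GPath (S : A → List A) (p : ℕ → List A) (ℓ : ℕ) : Prop :=
  (∀ i ≤ ℓ, (p i).length = 2) ∧ ∀ j < ℓ, GEdge S (p j) (p (j + 1))

/-- An initial configuration is good for `S` if every directed path in `G(S)` starting at a
`2`-word occurring in `ω₀` has length `< |A|²`. -/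
def GoodInit [Fintype A] (S : A → List A) (ω₀ : ℤ → A) : Prop :=
  ∀ (p : ℕ → List A) (ℓ : ℕ), GPath S p ℓ → Occurs (p 0) ω₀ → ℓ < (Fintype.card A) ^ 2

/-- The substitution matrix of `S`: `M(S)_{a,b}` is the number of occurrences of `a`
in `S(b)`. -/
def subMatrix [Fintype A] [DecidableEq A] (S : A → List A) : Matrix A A ℝ :=
  fun a b => ((S b).count a : ℝ)

/-- The Perron–Frobenius eigenvalue of `S`: the spectral radius of its substitution
matrix (viewed as a complex matrix). -/
noncomputable def pfEigenvalue [Fintype A] [DecidableEq A] (S : A → List A) : ℝ :=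
  (spectralRadius ℂ ((subMatrix S).map (algebraMap ℝ ℂ))).toReal

/-- The periodic configuration `u^∞`, satisfying `u^∞(n) = u(n mod |u|)`. -/
noncomputable def perConf [Nonempty A] (u : List A) : ℤ → A := fun n =>
  u.getD (n % (u.length : ℤ)).toNat (Classical.arbitrary A)

/-- `ℓ²(ℤ, ℂ)`. -/
abbrev l2Z : Type := lp (fun _ : ℤ => ℂ) 2

/-- `H` is the Schrödinger operator on `ℓ²(ℤ,ℂ)` with potential `v ∘ ω`:
`(H ψ)(n) = -(ψ(n+1) + ψ(n-1) - 2ψ(n)) + v(ω(n)) ψ(n)`. -/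
def IsSchrodinger (v : A → ℝ) (ω : ℤ → A) (H : l2Z →L[ℂ] l2Z) : Prop :=
  ∀ (ψ : l2Z) (n : ℤ),
    (H ψ : ℤ → ℂ) n = -((ψ : ℤ → ℂ) (n + 1) + (ψ : ℤ → ℂ) (n - 1) - 2 * (ψ : ℤ → ℂ) n)
      + (v (ω n) : ℂ) * (ψ : ℤ → ℂ) n

/-- The spectrum of `H`, viewed as a subset of `ℝ`. -/
def realSpectrum (H : l2Z →L[ℂ] l2Z) : Set ℝ := {x : ℝ | (x : ℂ) ∈ spectrum ℂ H}


lemma wordSub_append (S : A → List A) (u v : List A) :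
    wordSub S (u ++ v) = wordSub S u ++ wordSub S v := by
  simp [wordSub]

/-- prefix word of length m -/
def Wm (S : A → List A) (ω : ℤ → A) (m : ℕ) : List A :=
  wordSub S ((List.range m).map fun i : ℕ => ω (i : ℤ))

lemma Wm_succ (S : A → List A) (ω : ℤ → A) (m : ℕ) :
    Wm S ω (m + 1) = Wm S ω m ++ S (ω m) := by
  simp [Wm, List.range_succ, wordSub_append, wordSub]

lemma blockStart_natCast (S : A → List A) (ω : ℤ → A) (m : ℕ) :
    blockStart S ω (m : ℤ) = ((Wm S ω m).length : ℤ) := by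
  rw [blockStart, if_pos (by positivity)]
  simp [Wm, wordSub, List.length_flatten, Nat.cast_list_sum, List.map_map, Function.comp_def]
  rw [List.flatMap_def, List.map_flatten, List.map_map]
  simp [Function.comp_def]

lemma Wm_len_lt (S : A → List A) (hS : ∀ a, S a ≠ []) (ω : ℤ → A) (m : ℕ) :
    (Wm S ω m).length < (Wm S ω (m + 1)).length := by
  rw [Wm_succ]
  simp only [List.length_append]
  have := List.length_pos_iff.mpr (hS (ω m))
  omega

lemma Wm_len_mono (S : A → List A) (hS : ∀ a, S a ≠ []) (ω : ℤ → A) :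
    StrictMono fun m => (Wm S ω m).length :=
  strictMono_nat_of_lt_succ (Wm_len_lt S hS ω)

lemma blockStart_uniq (S : A → List A) (hS : ∀ a, S a ≠ []) (ω : ℤ → A) (m j : ℕ)
    (k : ℤ) (h1 : blockStart S ω k ≤ (j : ℤ)) (h2 : (j : ℤ) < blockStart S ω (k + 1))
    (h3 : (Wm S ω m).length ≤ j) (h4 : j < (Wm S ω (m + 1)).length) : k = (m : ℤ) := by
  have hk0 : 0 ≤ k := by
    by_contra hneg
    push_neg at hneg
    have hk1 : k + 1 ≤ 0 := by omega
    have hle : blockStart S ω (k + 1) ≤ 0 := by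
      rw [blockStart]
      split_ifs with h0
      · simp [show k + 1 = 0 by omega]
      · have h5 : (0:ℤ) ≤ ((List.range (-(k+1)).toNat).map fun i => ((S (ω (-(i : ℤ) - 1))).length : ℤ)).sum := by
          apply List.sum_nonneg
          intro x hx
          simp only [List.mem_map] at hx
          obtain ⟨i, _, rfl⟩ := hx
          positivity
        omega
    omega
  lift k to ℕ using hk0 with k'
  have hmono := Wm_len_mono S hS ω
  rw [blockStart_natCast] at h1
  rw [show ((k' : ℤ) + 1) = ((k' + 1 : ℕ) : ℤ) by push_cast; ring, blockStart_natCast] at h2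
  have h1' : (Wm S ω k').length ≤ j := by exact_mod_cast h1
  have h2' : j < (Wm S ω (k' + 1)).length := by exact_mod_cast h2
  rcases lt_trichotomy k' m with h | h | h
  · have : (Wm S ω (k' + 1)).length ≤ (Wm S ω m).length := hmono.monotone (by omega)
    omega
  · omega
  · have : (Wm S ω (m + 1)).length ≤ (Wm S ω k').length := hmono.monotone (by omega)
    omega

lemma confSub_eq_Wm [Nonempty A] (S : A → List A) (hS : ∀ a, S a ≠ []) (ω : ℤ → A)
    (m j : ℕ) (hj : j < (Wm S ω m).length) :
    confSub S ω (j : ℤ) = (Wm S ω m).getD j (Classical.arbitrary A) := by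
  induction m with
  | zero => simp [Wm, wordSub] at hj
  | succ m ih =>
    rcases lt_or_ge j (Wm S ω m).length with h | h
    · rw [ih h, Wm_succ, List.getD_append _ _ _ _ h]
    · -- j in block m
      have h4 : j < (Wm S ω (m + 1)).length := hj
      have hex : ∃ k : ℤ, blockStart S ω k ≤ (j : ℤ) ∧ (j : ℤ) < blockStart S ω (k + 1) := by
        refine ⟨(m : ℤ), ?_, ?_⟩
        · rw [blockStart_natCast]; exact_mod_cast h
        · rw [show ((m : ℤ) + 1) = ((m + 1 : ℕ) : ℤ) by push_cast; ring, blockStart_natCast]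
          exact_mod_cast h4
      rw [confSub, dif_pos hex]
      have hch := Classical.choose_spec hex
      have hkm : Classical.choose hex = (m : ℤ) :=
        blockStart_uniq S hS ω m j _ hch.1 hch.2 h h4
      rw [hkm, blockStart_natCast, Wm_succ, List.getD_append_right _ _ _ _ (by exact_mod_cast h)]
      congr 1
      omega

lemma confSub_iterate_eq [Nonempty A] (S : A → List A) (hS : ∀ a, S a ≠ []) (ω₀ : ℤ → A)
    (n : ℕ) (j : ℕ) (hj : j < ((wordSub S)^[n] [ω₀ 0]).length) :
    ((confSub S)^[n] ω₀) (j : ℤ)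
      = ((wordSub S)^[n] [ω₀ 0]).getD j (Classical.arbitrary A) := by
  induction n generalizing j with
  | zero =>
    simp only [Function.iterate_zero, id_eq, List.length_singleton] at hj ⊢
    obtain rfl : j = 0 := by omega
    simp
  | succ n ih =>
    set ωn := (confSub S)^[n] ω₀ with hωn
    set v := (wordSub S)^[n] [ω₀ 0] with hv
    have hpre : (List.range v.length).map (fun i : ℕ => ωn (i : ℤ)) = v := by
      apply List.ext_getElem
      · simp
      · intro i h1 h2
        simp only [List.getElem_map, List.getElem_range]
        rw [ih i (by simpa using h1)]
        exact List.getD_eq_getElem _ _ (by simpa using h1)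
    have hWm : Wm S ωn v.length = wordSub S v := by
      rw [Wm, hpre]
    simp only [Function.iterate_succ_apply'] at hj ⊢
    have := confSub_eq_Wm S hS ωn v.length j (by rw [hWm]; exact hj)
    rw [hWm] at this
    exact this

lemma occurs_of_forall [Nonempty A] (u : List A) (ω : ℤ → A) (k : ℤ)
    (h : ∀ i : ℕ, i < u.length → ω (k + (i : ℤ)) = u.getD i (Classical.arbitrary A)) :
    Occurs u ω := by
  refine ⟨k, ?_⟩
  have h2 : (do let a ← List.range u.length; pure ((a : ℕ) : ℤ))
      = (List.range u.length).map (fun a : ℕ => (a : ℤ)) := by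
    simp only [List.pure_def, List.bind_eq_flatMap]
    rw [List.flatMap_def]
    generalize List.range u.length = l
    induction l with
    | nil => simp
    | cons a l ih => simp [ih]
  rw [h2, List.map_map]
  apply List.ext_getElem
  · simp
  · intro i h1 hh
    simp only [List.getElem_map, List.getElem_range, Function.comp_apply]
    rw [h i h1, List.getD_eq_getElem _ _ h1]

/-- for `n ≥ log r / log θ + (log C_S - log Č)/ log θ`, every legal word of
length `r` occurs in `Sⁿ(ω₀)`. -/
theorem stmt9 {A : Type*} [Fintype A] [Nonempty A] (S : A → List A) (hS : ∀ a, S a ≠ [])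
    (hprim : Primitive S) (θ : ℝ) (hθ : 1 < θ) (Cl : ℝ) (hCl : 0 < Cl)
    (hgrow : ∀ (a : A) (n : ℕ), Cl * θ ^ n ≤ (((wordSub S)^[n] [a]).length : ℝ))
    (CS : ℝ) (hCS : 1 ≤ CS)
    (hlr : ∀ u w : List A, Legal S u → Legal S w →
      CS * (u.length : ℝ) ≤ (w.length : ℝ) → u <:+: w) :
    ∀ (ω₀ : ℤ → A) (r : ℕ), 1 ≤ r → ∀ n : ℕ,
      Real.log r / Real.log θ + (Real.log CS - Real.log Cl) / Real.log θ ≤ (n : ℝ) →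
      ∀ u : List A, u.length = r → Legal S u → Occurs u ((confSub S)^[n] ω₀) := by
  intro ω₀ r hr n hn u hu hleg
  have hθ0 : 0 < Real.log θ := Real.log_pos hθ
  set v := (wordSub S)^[n] [ω₀ 0] with hv
  have hlegv : Legal S v := ⟨ω₀ 0, n, List.infix_rfl⟩
  have hr0 : (0:ℝ) < r := by exact_mod_cast hr
  have hCS0 : (0:ℝ) < CS := lt_of_lt_of_le one_pos hCS
  have key : CS * (r:ℝ) ≤ (v.length : ℝ) := by
    rw [← add_div] at hn
    have h1 : Real.log r + (Real.log CS - Real.log Cl) ≤ (n : ℝ) * Real.log θ :=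
      (div_le_iff₀ hθ0).mp hn
    have h2 : (r * CS / Cl : ℝ) ≤ θ ^ n := by
      have hlog : Real.log (r * CS / Cl) ≤ Real.log (θ ^ n) := by
        rw [Real.log_pow, Real.log_div (by positivity) (ne_of_gt hCl),
          Real.log_mul (by positivity) (by positivity)]
        linarith
      exact (Real.log_le_log_iff (by positivity) (by positivity)).mp hlog
    have h3 := hgrow (ω₀ 0) n
    have h4 : Cl * (r * CS / Cl) ≤ Cl * θ ^ n := by
      exact mul_le_mul_of_nonneg_left h2 hCl.le
    have h5 : Cl * (r * CS / Cl) = CS * r := by field_simp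
    calc CS * (r:ℝ) = Cl * (r * CS / Cl) := h5.symm
      _ ≤ Cl * θ ^ n := h4
      _ ≤ (v.length : ℝ) := h3
  have hinf : u <:+: v := hlr u v hleg hlegv (by rw [hu]; exact key)
  obtain ⟨s, t, hst⟩ := hinf
  have hlenv : v.length = s.length + u.length + t.length := by
    rw [← hst]; simp only [List.length_append]
  apply occurs_of_forall u _ (s.length : ℤ)
  intro i h1
  have hidx : s.length + i < v.length := by omega
  have hcast : ((s.length : ℤ) + (i : ℤ)) = ((s.length + i : ℕ) : ℤ) := by push_cast; ring
  rw [hcast, confSub_iterate_eq S hS ω₀ n (s.length + i) hidx, ← hv, ← hst]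
  rw [List.getD_append _ _ _ _ (by simp only [List.length_append]; omega),
    List.getD_append_right _ _ _ _ (by omega),
    show s.length + i - s.length = i by omega]

end QC
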